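/- Let 𝒟 := 𝒫₃ ∪ { (2^{2^k})³ + t : 0 ≤ t ≤ (2^{2^k})², k ∈ ℕ } ⊆ ℕ, where 𝒫₃ := {m³ : m ∈ ℕ} is the sequence of cubes, and let D(x) := |𝒟 ∩ [0,x]|. Then D(2x) ≠ O(D(x)) (indeed limsup_{x→∞} D(2x)/D(x) = ∞), so 𝒟 is not an OR sequence, even though 𝒟 contains the cubes and hence is an additive basis. -/

import Mathlib

open Filter Asymptotics

/-- Counting function `A(x) = |𝒜 ∩ [0,x]|`. -/
noncomputable def cntA (A : Set ℕ) (x : ℝ) : ℕ :=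
  {n : ℕ | n ∈ A ∧ (n : ℝ) ≤ x}.ncard

/-- `A` is an additive basis: `hA = ℕ` for some `h ≥ 2`. -/
def AddBasis (A : Set ℕ) : Prop :=
  ∃ h : ℕ, 2 ≤ h ∧ ∀ n : ℕ, ∃ t : Fin h → ℕ, (∀ i, t i ∈ A) ∧ ∑ i, t i = n

/-- The sequence 𝒟 from Remark A.9: the cubes 𝒫₃ together with, for each `k ∈ ℕ`,
the interval `[(2^{2^k})³, (2^{2^k})³ + (2^{2^k})²]`. -/
def Dseq : Set ℕ :=
  {m : ℕ | ∃ j : ℕ, m = j ^ 3} ∪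
    {m : ℕ | ∃ k : ℕ, ∃ t ≤ (2 ^ 2 ^ k) ^ 2, m = (2 ^ 2 ^ k) ^ 3 + t}

lemma cntA_finite (A : Set ℕ) (x : ℝ) : {n : ℕ | n ∈ A ∧ (n : ℝ) ≤ x}.Finite := by
  apply (Set.finite_Iic (⌊x⌋₊)).subset
  intro n hn
  exact Nat.le_floor hn.2

lemma cntA_lower (A : Set ℕ) (x : ℝ) (s : Finset ℕ)
    (hs : ∀ n ∈ s, n ∈ A ∧ (n : ℝ) ≤ x) : s.card ≤ cntA A x := by
  have : (↑s : Set ℕ) ⊆ {n : ℕ | n ∈ A ∧ (n : ℝ) ≤ x} := fun n hn => hs n hn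
  simpa [cntA, Set.ncard_coe_finset] using Set.ncard_le_ncard this (cntA_finite A x)

lemma cntA_upper (A : Set ℕ) (x : ℝ) (s : Finset ℕ)
    (hs : {n : ℕ | n ∈ A ∧ (n : ℝ) ≤ x} ⊆ ↑s) : cntA A x ≤ s.card := by
  simpa [cntA, Set.ncard_coe_finset] using Set.ncard_le_ncard hs s.finite_toSet

lemma cntA_pos (x : ℝ) (hx : 0 ≤ x) : 1 ≤ cntA Dseq x := by
  have := cntA_lower Dseq x {0} (by
    intro n hn
    simp only [Finset.mem_singleton] at hn
    subst hn
    exact ⟨Or.inl ⟨0, by norm_num⟩, by simpa using hx⟩)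
  simpa using this

lemma lower_D (k : ℕ) :
    (2 ^ 2 ^ k) ^ 2 + 1 ≤ cntA Dseq (2 * (((2 ^ 2 ^ k : ℕ) ^ 3 : ℕ) : ℝ)) := by
  set N : ℕ := 2 ^ 2 ^ k with hN
  have hN1 : 1 ≤ N := Nat.one_le_two_pow
  have := cntA_lower Dseq (2 * ((N ^ 3 : ℕ) : ℝ))
      ((Finset.range (N ^ 2 + 1)).image (fun t => N ^ 3 + t)) (by
    intro n hn
    simp only [Finset.mem_image, Finset.mem_range] at hn
    obtain ⟨t, ht, rfl⟩ := hn
    have ht' : t ≤ N ^ 2 := Nat.lt_succ_iff.mp ht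
    refine ⟨Or.inr ⟨k, t, ht', rfl⟩, ?_⟩
    have h2 : N ^ 2 ≤ N ^ 3 := Nat.pow_le_pow_right hN1 (by norm_num)
    have : (N ^ 3 + t : ℕ) ≤ 2 * N ^ 3 := by omega
    push_cast
    exact_mod_cast this)
  rwa [Finset.card_image_of_injective _ (add_right_injective _), Finset.card_range] at this

lemma upper_D (k : ℕ) :
    cntA Dseq (((2 ^ 2 ^ k : ℕ) ^ 3 : ℕ) : ℝ) ≤ (k + 2) * (2 ^ 2 ^ k + 1) := by
  set N : ℕ := 2 ^ 2 ^ k with hN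
  have hN1 : 1 ≤ N := Nat.one_le_two_pow
  set F : Finset ℕ :=
    ((Finset.range (N + 1)).image (fun j => j ^ 3)) ∪
      ((Finset.range k).biUnion (fun j =>
        (Finset.range ((2 ^ 2 ^ j) ^ 2 + 1)).image (fun t => (2 ^ 2 ^ j) ^ 3 + t))) ∪
      {N ^ 3} with hF
  have hsub : {n : ℕ | n ∈ Dseq ∧ (n : ℝ) ≤ ((N ^ 3 : ℕ) : ℝ)} ⊆ ↑F := by
    intro n hn
    obtain ⟨hmem, hle⟩ := hn
    have hle' : n ≤ N ^ 3 := by exact_mod_cast hle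
    simp only [hF, Finset.coe_union, Set.mem_union, Finset.mem_coe, Finset.mem_union,
      Finset.mem_image, Finset.mem_range, Finset.mem_biUnion, Finset.mem_singleton]
    rcases hmem with ⟨j, rfl⟩ | ⟨k', t, ht, rfl⟩
    · left; left
      refine ⟨j, ?_, rfl⟩
      have : j ≤ N := by
        have := hle'
        exact (Nat.pow_le_pow_iff_left (by norm_num)).mp this
      omega
    · -- n = (2^2^k')^3 + t
      have hbase : (2 ^ 2 ^ k' : ℕ) ^ 3 ≤ N ^ 3 := le_trans (Nat.le_add_right _ _) hle'
      have hMN : (2 ^ 2 ^ k' : ℕ) ≤ N := (Nat.pow_le_pow_iff_left (by norm_num)).mp hbase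
      have hk' : k' ≤ k := by
        have h1 : (2:ℕ) ^ k' ≤ 2 ^ k :=
          (Nat.pow_le_pow_iff_right (by norm_num)).mp hMN
        exact (Nat.pow_le_pow_iff_right (by norm_num)).mp h1
      rcases Nat.lt_or_ge k' k with hlt | hge
      · left; right
        exact ⟨k', hlt, t, Nat.lt_succ_of_le ht, rfl⟩
      · right
        have hkk : k' = k := le_antisymm hk' hge
        subst hkk
        have ht0 : t = 0 := by
          have h := hle'
          rw [hN] at h
          omega
        simp [ht0, hN]
  have hcard := cntA_upper Dseq _ F hsub
  refine le_trans hcard ?_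
  have h1 : ((Finset.range (N + 1)).image (fun j => j ^ 3)).card ≤ N + 1 :=
    le_trans Finset.card_image_le (by simp)
  have h2 : ((Finset.range k).biUnion (fun j =>
      (Finset.range ((2 ^ 2 ^ j) ^ 2 + 1)).image (fun t => (2 ^ 2 ^ j) ^ 3 + t))).card
      ≤ k * (N + 1) := by
    refine le_trans Finset.card_biUnion_le ?_
    have : ∀ j ∈ Finset.range k,
        ((Finset.range ((2 ^ 2 ^ j) ^ 2 + 1)).image (fun t => (2 ^ 2 ^ j) ^ 3 + t)).card
        ≤ N + 1 := by
      intro j hj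
      refine le_trans Finset.card_image_le ?_
      simp only [Finset.card_range]
      have hj' : j < k := Finset.mem_range.mp hj
      have : ((2:ℕ) ^ 2 ^ j) ^ 2 ≤ N := by
        rw [hN, ← pow_mul]
        refine Nat.pow_le_pow_right (by norm_num) ?_
        have : 2 ^ j * 2 = 2 ^ (j + 1) := by ring
        rw [this]
        exact Nat.pow_le_pow_right (by norm_num) hj'
      omega
    calc ∑ j ∈ Finset.range k, ((Finset.range ((2 ^ 2 ^ j) ^ 2 + 1)).image
          (fun t => (2 ^ 2 ^ j) ^ 3 + t)).card
        ≤ ∑ _j ∈ Finset.range k, (N + 1) := Finset.sum_le_sum this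
      _ = k * (N + 1) := by simp [Finset.sum_const, mul_comm]
  calc F.card ≤ (((Finset.range (N + 1)).image (fun j => j ^ 3)) ∪
        ((Finset.range k).biUnion (fun j =>
          (Finset.range ((2 ^ 2 ^ j) ^ 2 + 1)).image (fun t => (2 ^ 2 ^ j) ^ 3 + t)))).card
        + 1 := by
        rw [hF]; exact le_trans (Finset.card_union_le _ _) (by simp)
    _ ≤ (N + 1) + k * (N + 1) + 1 := by
        have := Finset.card_union_le ((Finset.range (N + 1)).image (fun j => j ^ 3))
          ((Finset.range k).biUnion (fun j =>
            (Finset.range ((2 ^ 2 ^ j) ^ 2 + 1)).image (fun t => (2 ^ 2 ^ j) ^ 3 + t)))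
        omega
    _ ≤ (k + 2) * (N + 1) := by nlinarith

lemma freq_main (M : ℝ) : ∃ᶠ x : ℝ in atTop,
    M < (cntA Dseq (2 * x) : ℝ) / (cntA Dseq x : ℝ) := by
  rw [Filter.frequently_atTop]
  intro b
  set m : ℕ := max (⌈M⌉₊ + 1) (⌈b⌉₊ + 1) with hm
  set k : ℕ := m + 3 with hk
  set N : ℕ := 2 ^ 2 ^ k with hN
  have hN1 : 1 ≤ N := Nat.one_le_two_pow
  have h2m : m < 2 ^ m := Nat.lt_two_pow_self (n := m)
  have h2k : k + 1 < 2 ^ (k + 1) := Nat.lt_two_pow_self (n := k + 1)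
  have h8 : (2:ℕ) ^ k = 8 * 2 ^ m := by rw [hk, pow_add]; ring
  have h1 : k + m + 3 ≤ 2 ^ k := by omega
  have hc : 2 * ((k + 2) * m) ≤ 2 ^ (k + m + 2) := by
    have : 2 * ((k + 2) * m) ≤ 2 * (2 ^ (k + 1) * 2 ^ m) := by
      have := Nat.mul_le_mul (show k + 2 ≤ 2 ^ (k+1) by omega)
        (show m ≤ 2 ^ m from h2m.le)
      omega
    calc 2 * ((k + 2) * m) ≤ 2 * (2 ^ (k + 1) * 2 ^ m) := this
      _ = 2 ^ (k + m + 2) := by rw [← pow_add]; ring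
  have hkey : 2 * ((k + 2) * m) ≤ N := by
    refine le_trans hc ?_
    rw [hN]
    exact Nat.pow_le_pow_right (by norm_num) (by omega)
  -- the chosen point
  refine ⟨((N ^ 3 : ℕ) : ℝ), ?_, ?_⟩
  · -- b ≤ N^3
    have hbm : b ≤ (m : ℝ) := by
      calc b ≤ (⌈b⌉₊ : ℝ) := Nat.le_ceil b
        _ ≤ (m : ℝ) := by exact_mod_cast (by omega : ⌈b⌉₊ ≤ m)
    have hmN : m ≤ N ^ 3 := by
      have h1 : m ≤ 2 ^ m := h2m.le
      have h2 : (2:ℕ) ^ m ≤ N := by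
        rw [hN]; exact Nat.pow_le_pow_right (by norm_num) (by omega)
      have h3 : N ≤ N ^ 3 := Nat.le_self_pow (by norm_num) N
      omega
    calc b ≤ (m : ℝ) := hbm
      _ ≤ ((N ^ 3 : ℕ) : ℝ) := by exact_mod_cast hmN
  · -- the ratio inequality
    have hx0 : (0:ℝ) ≤ ((N ^ 3 : ℕ) : ℝ) := by positivity
    have hpos : (0:ℝ) < (cntA Dseq ((N ^ 3 : ℕ) : ℝ) : ℝ) := by
      exact_mod_cast Nat.lt_of_lt_of_le Nat.zero_lt_one (cntA_pos _ hx0)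
    rw [lt_div_iff₀ hpos]
    have hup : (cntA Dseq ((N ^ 3 : ℕ) : ℝ) : ℝ) ≤ ((k + 2) * (N + 1) : ℕ) := by
      exact_mod_cast upper_D k
    have hlo : ((N ^ 2 + 1 : ℕ) : ℝ) ≤ (cntA Dseq (2 * ((N ^ 3 : ℕ) : ℝ)) : ℝ) := by
      exact_mod_cast lower_D k
    have hMm : M < (m : ℝ) := by
      calc M ≤ (⌈M⌉₊ : ℝ) := Nat.le_ceil M
        _ < (m : ℝ) := by exact_mod_cast (by omega : ⌈M⌉₊ < m)
    have hnat : (k + 2) * (N + 1) * m ≤ N ^ 2 := by nlinarith [hkey, hN1]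
    have hstep : M * (cntA Dseq ((N ^ 3 : ℕ) : ℝ) : ℝ) < (m : ℝ) * ((k + 2) * (N + 1) : ℕ) := by
      calc M * (cntA Dseq ((N ^ 3 : ℕ) : ℝ) : ℝ)
          < (m : ℝ) * (cntA Dseq ((N ^ 3 : ℕ) : ℝ) : ℝ) := by
            exact mul_lt_mul_of_pos_right hMm hpos
        _ ≤ (m : ℝ) * ((k + 2) * (N + 1) : ℕ) := by
            exact mul_le_mul_of_nonneg_left hup (by positivity)
    refine lt_of_lt_of_le hstep ?_
    calc (m : ℝ) * ((k + 2) * (N + 1) : ℕ) = (((k + 2) * (N + 1) * m : ℕ) : ℝ) := by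
          push_cast; ring
      _ ≤ ((N ^ 2 : ℕ) : ℝ) := by exact_mod_cast hnat
      _ ≤ ((N ^ 2 + 1 : ℕ) : ℝ) := by exact_mod_cast Nat.le_succ _
      _ ≤ _ := hlo

theorem stmt_19
    (h9 : ∀ n : ℕ, ∃ t : Fin 9 → ℕ, (∀ i, ∃ m : ℕ, t i = m ^ 3) ∧ ∑ i, t i = n) :
    ¬ ((fun x : ℝ => (cntA Dseq (2 * x) : ℝ)) =O[atTop]
        (fun x : ℝ => (cntA Dseq x : ℝ))) ∧
    (∀ M : ℝ, ∃ᶠ x : ℝ in atTop,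
      M < (cntA Dseq (2 * x) : ℝ) / (cntA Dseq x : ℝ)) ∧
    AddBasis Dseq := by
  refine ⟨?_, freq_main, ?_⟩
  · intro hO
    obtain ⟨C, hC0, hC⟩ := hO.exists_pos
    have hbound := hC.bound
    have hev : ∀ᶠ x : ℝ in atTop,
        ‖(cntA Dseq (2 * x) : ℝ)‖ ≤ C * ‖(cntA Dseq x : ℝ)‖ ∧ (0:ℝ) ≤ x :=
      hbound.and (eventually_ge_atTop 0)
    obtain ⟨x, hx1, hx2, hx3⟩ := ((freq_main C).and_eventually hev).exists
    have hpos : (0:ℝ) < (cntA Dseq x : ℝ) := by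
      exact_mod_cast Nat.lt_of_lt_of_le Nat.zero_lt_one (cntA_pos x hx3)
    rw [Real.norm_natCast, Real.norm_natCast] at hx2
    have : (cntA Dseq (2 * x) : ℝ) / (cntA Dseq x : ℝ) ≤ C := by
      rw [div_le_iff₀ hpos]
      exact hx2
    linarith
  · refine ⟨9, by norm_num, fun n => ?_⟩
    obtain ⟨t, ht, hsum⟩ := h9 n
    exact ⟨t, fun i => Or.inl (ht i), hsum⟩
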